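/- arXiv:2205.13656 — 3 statements merged into one kernel-verified Lean document; each statement's English description precedes it below -/
import Mathlib

section
/- Assume the CFL condition. Then for every j = 0, …, N and all α, γ ∈ ℤ^d, the grid scheme satisfies |U^j_α − U^j_γ| ≤ L_{u₀}|hα − hγ|^a + t_j L_f |hα − hγ|^a. -/
open scoped BigOperators

/-- `J_p(ξ) = |ξ|^{p-2} ξ`. -/
noncomputable def Jp (p ξ : ℝ) : ℝ := |ξ| ^ (p - 2) * ξ

/-- The grid point `y_β = h β ∈ ℝ^d` for `β ∈ ℤ^d`. -/
noncomputable def ygrid (d : ℕ) (h : ℝ) (β : Fin d → ℤ) : EuclideanSpace ℝ (Fin d) :=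
  (WithLp.equiv 2 (Fin d → ℝ)).symm (fun i => h * (β i : ℝ))

/-- The discrete `p`-Laplacian `D_p^h ψ(x) = Σ_β J_p(ψ(x+y_β) - ψ(x)) ω_β`. -/
noncomputable def Dph (d : ℕ) (p h : ℝ) (ω : (Fin d → ℤ) → ℝ)
    (ψ : EuclideanSpace ℝ (Fin d) → ℝ) (x : EuclideanSpace ℝ (Fin d)) : ℝ :=
  ∑ᶠ β, Jp p (ψ (x + ygrid d h β) - ψ x) * ω β

lemma Jp_neg (p x : ℝ) : Jp p (-x) = - Jp p x := by
  simp only [Jp, abs_neg]; ring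

lemma Jp_mono {p : ℝ} (hp : 2 ≤ p) : Monotone (Jp p) := by
  have hq : (0:ℝ) ≤ p - 2 := by linarith
  have key : ∀ a b : ℝ, 0 ≤ a → a ≤ b → Jp p a ≤ Jp p b := by
    intro a b ha hab
    have hb : 0 ≤ b := ha.trans hab
    have h1 : |a| ^ (p-2) ≤ |b| ^ (p-2) :=
      Real.rpow_le_rpow (abs_nonneg a) (by rw [abs_of_nonneg ha, abs_of_nonneg hb]; exact hab) hq
    calc |a| ^ (p-2) * a ≤ |b| ^ (p-2) * a := by
          exact mul_le_mul_of_nonneg_right h1 ha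
      _ ≤ |b| ^ (p-2) * b := by
          exact mul_le_mul_of_nonneg_left hab (Real.rpow_nonneg (abs_nonneg b) _)
  intro a b hab
  rcases le_total 0 a with ha | ha
  · exact key a b ha hab
  · rcases le_total b 0 with hb | hb
    · have := key (-b) (-a) (by linarith) (by linarith)
      rw [Jp_neg, Jp_neg] at this; linarith
    · have h1 : Jp p a ≤ 0 := mul_nonpos_of_nonneg_of_nonpos (Real.rpow_nonneg (abs_nonneg a) _) ha
      have h2 : 0 ≤ Jp p b := mul_nonneg (Real.rpow_nonneg (abs_nonneg b) _) hb
      linarith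

lemma rpow_diff_mul_le {q x y K : ℝ} (hq : 0 ≤ q) (hy : 0 ≤ y) (hyx : y ≤ x) (hxK : x ≤ K) :
    (x ^ q - y ^ q) * y ≤ q * K ^ q * (x - y) := by
  rcases eq_or_lt_of_le hy with hy0 | hy0
  · rw [← hy0]
    have hK : 0 ≤ K := le_trans (hy.trans hyx) hxK
    have : 0 ≤ q * K ^ q * (x - 0) := by
      apply mul_nonneg (mul_nonneg hq (Real.rpow_nonneg hK _)); linarith
    simpa using this
  rcases eq_or_lt_of_le hyx with hxy0 | hxy0
  · rw [hxy0]; simp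
  have hK : 0 < K := lt_of_lt_of_le (hy0.trans hxy0) hxK
  obtain ⟨t, ht, hslope⟩ := exists_hasDerivAt_eq_slope (fun s => s ^ q) (fun s => q * s ^ (q-1))
    hxy0
    (by
      apply ContinuousOn.rpow_const continuousOn_id
      intro s hs
      left
      have : 0 < s := lt_of_lt_of_le hy0 hs.1
      exact ne_of_gt this)
    (by
      intro s hs
      exact Real.hasDerivAt_rpow_const (Or.inl (ne_of_gt (hy0.trans hs.1))))
  have ht1 : y < t := ht.1
  have ht2 : t < x := ht.2
  have ht0 : 0 < t := hy0.trans ht1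
  have heq : x ^ q - y ^ q = q * t ^ (q-1) * (x - y) := by
    rw [hslope]
    field_simp
  rw [heq]
  have hb : t ^ (q-1) * y ≤ K ^ q := by
    rcases le_total q 1 with hq1 | hq1
    · have h1 : t ^ (q-1) ≤ y ^ (q-1) :=
        Real.rpow_le_rpow_of_nonpos hy0 ht1.le (by linarith)
      calc t ^ (q-1) * y ≤ y ^ (q-1) * y := mul_le_mul_of_nonneg_right h1 hy
        _ = y ^ q := by rw [← Real.rpow_add_one (ne_of_gt hy0)]; ring_nf
        _ ≤ K ^ q := Real.rpow_le_rpow hy0.le (by linarith) hq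
    · have h1 : t ^ (q-1) ≤ K ^ (q-1) :=
        Real.rpow_le_rpow ht0.le (by linarith) (by linarith)
      calc t ^ (q-1) * y ≤ K ^ (q-1) * K := by
            apply mul_le_mul h1 (by linarith) hy (Real.rpow_nonneg hK.le _)
        _ = K ^ q := by rw [← Real.rpow_add_one (ne_of_gt hK)]; ring_nf
  calc q * t ^ (q-1) * (x - y) * y = q * (t ^ (q-1) * y) * (x - y) := by ring
    _ ≤ q * K ^ q * (x - y) := by
        apply mul_le_mul_of_nonneg_right _ (by linarith)
        exact mul_le_mul_of_nonneg_left hb hq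

lemma Jp_lip_aux {p a b K : ℝ} (hp : 2 ≤ p) (hba : |b| ≤ |a|) (ha : |a| ≤ K) :
    |Jp p a - Jp p b| ≤ (p - 1) * K ^ (p-2) * |a - b| := by
  have hq : (0:ℝ) ≤ p - 2 := by linarith
  have hK : 0 ≤ K := (abs_nonneg a).trans ha
  have hexp : Jp p a - Jp p b = |a| ^ (p-2) * (a - b) + (|a| ^ (p-2) - |b| ^ (p-2)) * b := by
    simp only [Jp]; ring
  have h1 : |b| ^ (p-2) ≤ |a| ^ (p-2) := Real.rpow_le_rpow (abs_nonneg b) hba hq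
  have h2 : |(|a| ^ (p-2) - |b| ^ (p-2)) * b| = (|a| ^ (p-2) - |b| ^ (p-2)) * |b| := by
    rw [abs_mul, abs_of_nonneg (by linarith)]
  have h3 : (|a| ^ (p-2) - |b| ^ (p-2)) * |b| ≤ (p-2) * K ^ (p-2) * (|a| - |b|) :=
    rpow_diff_mul_le hq (abs_nonneg b) hba ha
  have h4 : |a| - |b| ≤ |a - b| := by
    have := abs_sub_abs_le_abs_sub a b; linarith
  have h5 : |(|a|:ℝ) ^ (p-2) * (a - b)| ≤ K ^ (p-2) * |a - b| := by
    rw [abs_mul, abs_of_nonneg (Real.rpow_nonneg (abs_nonneg a) _)]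
    exact mul_le_mul_of_nonneg_right (Real.rpow_le_rpow (abs_nonneg a) ha hq) (abs_nonneg _)
  have hKq : 0 ≤ K ^ (p-2) := Real.rpow_nonneg hK _
  calc |Jp p a - Jp p b| ≤ |(|a|:ℝ) ^ (p-2) * (a - b)| + |(|a| ^ (p-2) - |b| ^ (p-2)) * b| := by
        rw [hexp]; exact abs_add_le _ _
    _ ≤ K ^ (p-2) * |a - b| + (p-2) * K ^ (p-2) * (|a| - |b|) := by
        rw [h2]; exact add_le_add h5 h3
    _ ≤ K ^ (p-2) * |a - b| + (p-2) * K ^ (p-2) * |a - b| := by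
        apply add_le_add (le_refl _)
        exact mul_le_mul_of_nonneg_left h4 (mul_nonneg (by linarith) hKq)
    _ = (p - 1) * K ^ (p-2) * |a - b| := by ring

lemma Jp_lip {p a b K : ℝ} (hp : 2 ≤ p) (ha : |a| ≤ K) (hb : |b| ≤ K) :
    |Jp p a - Jp p b| ≤ (p - 1) * K ^ (p-2) * |a - b| := by
  rcases le_total (|b|) (|a|) with hc | hc
  · exact Jp_lip_aux hp hc ha
  · have := Jp_lip_aux hp hc hb
    rw [abs_sub_comm (Jp p b), abs_sub_comm b a] at this
    exact this

lemma ygrid_apply (d : ℕ) (h : ℝ) (β : Fin d → ℤ) (i : Fin d) :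
    ygrid d h β i = h * (β i : ℝ) := rfl

lemma ygrid_add (d : ℕ) (h : ℝ) (α β : Fin d → ℤ) :
    ygrid d h (α + β) = ygrid d h α + ygrid d h β := by
  ext i
  simp [ygrid_apply, ygrid]
  ring

lemma coord_le_norm (d : ℕ) (h : ℝ) (β : Fin d → ℤ) (i : Fin d) :
    |h * (β i : ℝ)| ≤ ‖ygrid d h β‖ := by
  have h1 := EuclideanSpace.norm_eq (ygrid d h β)
  rw [h1]
  have h2 : |h * (β i : ℝ)| = Real.sqrt (‖ygrid d h β i‖ ^ 2) := by
    rw [ygrid_apply]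
    rw [Real.sqrt_sq_eq_abs]
    simp [Real.norm_eq_abs, abs_abs, abs_mul]
  rw [h2]
  apply Real.sqrt_le_sqrt
  exact Finset.single_le_sum (f := fun j => ‖ygrid d h β j‖ ^ 2) (fun j _ => by positivity)
    (Finset.mem_univ i)

/-- Preservation of the Hölder modulus of continuity of the data (Proposition 3.2). -/
theorem scheme_preserves_holder_modulus (d : ℕ) (hd : 1 ≤ d) (p : ℝ) (hp : 2 ≤ p)
    (h r τ : ℝ) (hh : 0 < h) (hr : 0 < r) (hτ : 0 < τ) (N : ℕ) (M : ℝ) (hM : 0 < M)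
    (ω : (Fin d → ℤ) → ℝ) (hsym : ∀ β, ω (-β) = ω β) (hnn : ∀ β, 0 ≤ ω β)
    (hzero : ∀ β, r ≤ ‖ygrid d h β‖ → ω β = 0)
    (hsum : ∑ᶠ β, ω β ≤ M * r ^ (-p))
    (a Lu Lf : ℝ) (ha0 : 0 < a) (ha1 : a ≤ 1)
    (u₀ f : EuclideanSpace ℝ (Fin d) → ℝ)
    (hu₀b : ∃ C, ∀ x, |u₀ x| ≤ C) (hfb : ∃ C, ∀ x, |f x| ≤ C)
    (hu₀ : ∀ x y, |u₀ x - u₀ y| ≤ Lu * ‖x - y‖ ^ a)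
    (hf : ∀ x y, |f x - f y| ≤ Lf * ‖x - y‖ ^ a)
    (U : ℕ → EuclideanSpace ℝ (Fin d) → ℝ)
    (hU0 : ∀ x, U 0 x = u₀ x)
    (hUrec : ∀ j x, U (j + 1) x = U j x + τ * (Dph d p h ω (U j) x + f x))
    (hCFL : τ * (p - 1) * M * (Lu + (N : ℝ) * τ * Lf) ^ (p - 2) ≤
      r ^ (2 + (1 - a) * (p - 2))) :
    ∀ j ≤ N, ∀ α γ : Fin d → ℤ,
      |U j (ygrid d h α) - U j (ygrid d h γ)| ≤
        Lu * ‖ygrid d h α - ygrid d h γ‖ ^ a +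
          (j : ℝ) * τ * (Lf * ‖ygrid d h α - ygrid d h γ‖ ^ a) := by
  classical
  -- nonnegativity of the Hölder constants
  have hnorm_pos : ∀ v : EuclideanSpace ℝ (Fin d), v ≠ 0 → 0 < ‖v - 0‖ ^ a := by
    intro v hv
    rw [sub_zero]
    exact Real.rpow_pos_of_pos (norm_pos_iff.mpr hv) a
  have he : (ygrid d h (fun _ => (1:ℤ))) ≠ 0 := by
    intro hcon
    have h1 : ygrid d h (fun _ => (1:ℤ)) ⟨0, hd⟩ = 0 := by rw [hcon]; rfl
    rw [ygrid_apply] at h1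
    simp at h1
    exact ne_of_gt hh h1
  have hLu : 0 ≤ Lu := by
    have h1 := hu₀ (ygrid d h (fun _ => (1:ℤ))) 0
    have h2 := hnorm_pos _ he
    have h3 : 0 * ‖ygrid d h (fun _ => (1:ℤ)) - 0‖ ^ a ≤ Lu * ‖ygrid d h (fun _ => (1:ℤ)) - 0‖ ^ a := by
      rw [zero_mul]; exact (abs_nonneg _).trans h1
    exact le_of_mul_le_mul_right (by simpa using h3) h2
  have hLf : 0 ≤ Lf := by
    have h1 := hf (ygrid d h (fun _ => (1:ℤ))) 0
    have h2 := hnorm_pos _ he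
    have h3 : 0 * ‖ygrid d h (fun _ => (1:ℤ)) - 0‖ ^ a ≤ Lf * ‖ygrid d h (fun _ => (1:ℤ)) - 0‖ ^ a := by
      rw [zero_mul]; exact (abs_nonneg _).trans h1
    exact le_of_mul_le_mul_right (by simpa using h3) h2
  -- finite support
  set B : ℤ := ⌈r / h⌉ with hB
  set T : Finset (Fin d → ℤ) := Finset.Icc (fun _ => -B) (fun _ => B) with hT
  have hsupp : ∀ β, ω β ≠ 0 → β ∈ T := by
    intro β hβ
    have hlt : ‖ygrid d h β‖ < r := by
      by_contra hcon
      push_neg at hcon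
      exact hβ (hzero β hcon)
    rw [hT, Finset.mem_Icc]
    have hco : ∀ i, -B ≤ β i ∧ β i ≤ B := by
      intro i
      have h1 := coord_le_norm d h β i
      have h2 : |h * (β i : ℝ)| < r := lt_of_le_of_lt h1 hlt
      rw [abs_mul, abs_of_pos hh] at h2
      have h3 : |(β i : ℝ)| < r / h := (lt_div_iff₀ hh).mpr (by linarith)
      have h4 : (r / h : ℝ) ≤ (B : ℝ) := Int.le_ceil _
      have h5 : |(β i : ℝ)| ≤ (B : ℝ) := le_of_lt (lt_of_lt_of_le h3 h4)
      have h6 : |β i| ≤ B := by exact_mod_cast h5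
      exact abs_le.mp h6
    exact ⟨fun i => (hco i).1, fun i => (hco i).2⟩
  have hDphT : ∀ (ψ : EuclideanSpace ℝ (Fin d) → ℝ) x,
      Dph d p h ω ψ x = ∑ β ∈ T, Jp p (ψ (x + ygrid d h β) - ψ x) * ω β := by
    intro ψ x
    apply finsum_eq_finset_sum_of_support_subset
    intro β hβ
    simp only [Function.mem_support] at hβ
    exact Finset.mem_coe.mpr (hsupp β (fun hc => hβ (by rw [hc, mul_zero])))
  have hsumT : ∑ β ∈ T, ω β ≤ M * r ^ (-p) := by
    rw [← finsum_eq_finset_sum_of_support_subset ω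
      (fun β hβ => Finset.mem_coe.mpr (hsupp β (Function.mem_support.mp hβ)))]
    exact hsum
  -- constants
  set K : ℝ := (Lu + (N:ℝ) * τ * Lf) * r ^ a with hKdef
  have hLuN : 0 ≤ Lu + (N:ℝ) * τ * Lf := by positivity
  have hK0 : 0 ≤ K := mul_nonneg hLuN (Real.rpow_nonneg hr.le a)
  set Cm : ℝ := (p - 1) * K ^ (p-2) with hCmdef
  have hCm0 : 0 ≤ Cm := mul_nonneg (by linarith) (Real.rpow_nonneg hK0 _)
  have hCFL1 : τ * Cm * (M * r ^ (-p)) ≤ 1 := by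
    have hKsplit : K ^ (p-2) = (Lu + (N:ℝ) * τ * Lf) ^ (p-2) * r ^ (a * (p-2)) := by
      rw [hKdef, Real.mul_rpow hLuN (Real.rpow_nonneg hr.le a), ← Real.rpow_mul hr.le]
    calc τ * Cm * (M * r ^ (-p))
        = (τ * (p - 1) * M * (Lu + (N:ℝ) * τ * Lf) ^ (p - 2)) * (r ^ (a * (p-2)) * r ^ (-p)) := by
          rw [hCmdef, hKsplit]; ring
      _ ≤ r ^ (2 + (1 - a) * (p - 2)) * (r ^ (a * (p-2)) * r ^ (-p)) := by
          apply mul_le_mul_of_nonneg_right hCFL (by positivity)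
      _ = 1 := by
          rw [← Real.rpow_add hr, ← Real.rpow_add hr,
            show (2 + (1 - a) * (p - 2)) + (a * (p-2) + -p) = 0 by ring, Real.rpow_zero]
  -- the induction
  intro j
  induction j with
  | zero =>
    intro _ α γ
    rw [hU0, hU0]
    simpa using hu₀ (ygrid d h α) (ygrid d h γ)
  | succ j ih =>
    intro hj α γ
    have hjN : j ≤ N := Nat.le_of_succ_le hj
    have IH := ih hjN
    set x : EuclideanSpace ℝ (Fin d) := ygrid d h α with hx
    set y : EuclideanSpace ℝ (Fin d) := ygrid d h γ with hy
    have hxb : ∀ β, ygrid d h (α + β) = x + ygrid d h β := fun β => by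
      rw [ygrid_add, hx]
    have hyb : ∀ β, ygrid d h (γ + β) = y + ygrid d h β := fun β => by
      rw [ygrid_add, hy]
    -- Hölder bounds from the induction hypothesis
    have hA : ∀ β, ω β ≠ 0 → |U j (x + ygrid d h β) - U j x| ≤ K := by
      intro β hβ
      have h1 := IH (α + β) α
      rw [hxb β] at h1
      rw [add_sub_cancel_left] at h1
      have h3 : ‖ygrid d h β‖ ≤ r := by
        by_contra hcon
        push_neg at hcon
        exact hβ (hzero β hcon.le)
      have h4 : ‖ygrid d h β‖ ^ a ≤ r ^ a :=
        Real.rpow_le_rpow (norm_nonneg _) h3 ha0.le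
      have h5 : 0 ≤ ‖ygrid d h β‖ ^ a := Real.rpow_nonneg (norm_nonneg _) a
      calc |U j (x + ygrid d h β) - U j x|
          ≤ Lu * ‖ygrid d h β‖ ^ a + (j:ℝ) * τ * (Lf * ‖ygrid d h β‖ ^ a) := h1
        _ = (Lu + (j:ℝ) * τ * Lf) * ‖ygrid d h β‖ ^ a := by ring
        _ ≤ (Lu + (N:ℝ) * τ * Lf) * r ^ a := by
            apply mul_le_mul _ h4 h5 hLuN
            have hjr : (j:ℝ) ≤ (N:ℝ) := Nat.cast_le.mpr hjN
            have h6 : (j:ℝ) * τ * Lf ≤ (N:ℝ) * τ * Lf :=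
              mul_le_mul_of_nonneg_right (mul_le_mul_of_nonneg_right hjr hτ.le) hLf
            linarith
        _ = K := hKdef.symm
    have hBb : ∀ β, ω β ≠ 0 → |U j (y + ygrid d h β) - U j y| ≤ K := by
      intro β hβ
      have h1 := IH (γ + β) γ
      rw [hyb β] at h1
      rw [add_sub_cancel_left] at h1
      have h3 : ‖ygrid d h β‖ ≤ r := by
        by_contra hcon
        push_neg at hcon
        exact hβ (hzero β hcon.le)
      have h4 : ‖ygrid d h β‖ ^ a ≤ r ^ a :=
        Real.rpow_le_rpow (norm_nonneg _) h3 ha0.le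
      have h5 : 0 ≤ ‖ygrid d h β‖ ^ a := Real.rpow_nonneg (norm_nonneg _) a
      calc |U j (y + ygrid d h β) - U j y|
          ≤ Lu * ‖ygrid d h β‖ ^ a + (j:ℝ) * τ * (Lf * ‖ygrid d h β‖ ^ a) := h1
        _ = (Lu + (j:ℝ) * τ * Lf) * ‖ygrid d h β‖ ^ a := by ring
        _ ≤ (Lu + (N:ℝ) * τ * Lf) * r ^ a := by
            apply mul_le_mul _ h4 h5 hLuN
            have hjr : (j:ℝ) ≤ (N:ℝ) := Nat.cast_le.mpr hjN
            have h6 : (j:ℝ) * τ * Lf ≤ (N:ℝ) * τ * Lf :=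
              mul_le_mul_of_nonneg_right (mul_le_mul_of_nonneg_right hjr hτ.le) hLf
            linarith
        _ = K := hKdef.symm
    -- the slope coefficients
    set c : (Fin d → ℤ) → ℝ := fun β =>
      if (U j (x + ygrid d h β) - U j x) = (U j (y + ygrid d h β) - U j y) then 0
      else (Jp p (U j (x + ygrid d h β) - U j x) - Jp p (U j (y + ygrid d h β) - U j y)) /
        ((U j (x + ygrid d h β) - U j x) - (U j (y + ygrid d h β) - U j y)) with hc
    have hc_eq : ∀ β, Jp p (U j (x + ygrid d h β) - U j x) - Jp p (U j (y + ygrid d h β) - U j y)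
        = c β * ((U j (x + ygrid d h β) - U j x) - (U j (y + ygrid d h β) - U j y)) := by
      intro β
      by_cases hAB : (U j (x + ygrid d h β) - U j x) = (U j (y + ygrid d h β) - U j y)
      · simp only [hc, if_pos hAB, hAB]
        ring
      · simp only [hc, if_neg hAB]
        rw [div_mul_cancel₀ _ (sub_ne_zero.mpr hAB)]
    have hc0 : ∀ β, 0 ≤ c β := by
      intro β
      by_cases hAB : (U j (x + ygrid d h β) - U j x) = (U j (y + ygrid d h β) - U j y)
      · simp [hc, if_pos hAB]
      · simp only [hc, if_neg hAB]
        rcases lt_or_gt_of_ne hAB with hlt | hgt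
        · apply div_nonneg_of_nonpos
          · exact sub_nonpos.mpr (Jp_mono hp hlt.le)
          · exact sub_nonpos.mpr hlt.le
        · apply div_nonneg
          · exact sub_nonneg.mpr (Jp_mono hp hgt.le)
          · exact sub_nonneg.mpr hgt.le
    have hc_le : ∀ β, ω β ≠ 0 → c β ≤ Cm := by
      intro β hβ
      by_cases hAB : (U j (x + ygrid d h β) - U j x) = (U j (y + ygrid d h β) - U j y)
      · simp only [hc, if_pos hAB]; exact hCm0
      · simp only [hc, if_neg hAB]
        have hne : (U j (x + ygrid d h β) - U j x) - (U j (y + ygrid d h β) - U j y) ≠ 0 :=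
          sub_ne_zero.mpr hAB
        have habs : |(U j (x + ygrid d h β) - U j x) - (U j (y + ygrid d h β) - U j y)| > 0 :=
          abs_pos.mpr hne
        have hlip := Jp_lip (a := U j (x + ygrid d h β) - U j x)
          (b := U j (y + ygrid d h β) - U j y) hp (hA β hβ) (hBb β hβ)
        calc (Jp p (U j (x + ygrid d h β) - U j x) - Jp p (U j (y + ygrid d h β) - U j y)) /
              ((U j (x + ygrid d h β) - U j x) - (U j (y + ygrid d h β) - U j y))
            ≤ |(Jp p (U j (x + ygrid d h β) - U j x) - Jp p (U j (y + ygrid d h β) - U j y)) /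
              ((U j (x + ygrid d h β) - U j x) - (U j (y + ygrid d h β) - U j y))| := le_abs_self _
          _ = |Jp p (U j (x + ygrid d h β) - U j x) - Jp p (U j (y + ygrid d h β) - U j y)| /
              |(U j (x + ygrid d h β) - U j x) - (U j (y + ygrid d h β) - U j y)| := abs_div _ _
          _ ≤ Cm := by
              rw [div_le_iff₀ habs]
              rw [hCmdef]
              exact hlip
    -- bound on the total weight
    have hσ0 : (0:ℝ) ≤ ∑ β ∈ T, c β * ω β :=
      Finset.sum_nonneg fun β _ => mul_nonneg (hc0 β) (hnn β)
    have hσ1 : τ * ∑ β ∈ T, c β * ω β ≤ 1 := by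
      have h1 : ∑ β ∈ T, c β * ω β ≤ Cm * ∑ β ∈ T, ω β := by
        rw [Finset.mul_sum]
        apply Finset.sum_le_sum
        intro β _
        by_cases hβ : ω β = 0
        · simp [hβ]
        · exact mul_le_mul_of_nonneg_right (hc_le β hβ) (hnn β)
      have h2 : Cm * ∑ β ∈ T, ω β ≤ Cm * (M * r ^ (-p)) :=
        mul_le_mul_of_nonneg_left hsumT hCm0
      calc τ * ∑ β ∈ T, c β * ω β ≤ τ * (Cm * (M * r ^ (-p))) := by
            apply mul_le_mul_of_nonneg_left (h1.trans h2) hτ.le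
        _ = τ * Cm * (M * r ^ (-p)) := by ring
        _ ≤ 1 := hCFL1
    -- the key algebraic identity
    have hsum_eq : (∑ β ∈ T, Jp p (U j (x + ygrid d h β) - U j x) * ω β) -
        (∑ β ∈ T, Jp p (U j (y + ygrid d h β) - U j y) * ω β)
        = (∑ β ∈ T, c β * ω β * (U j (x + ygrid d h β) - U j (y + ygrid d h β))) -
          (∑ β ∈ T, c β * ω β) * (U j x - U j y) := by
      rw [← Finset.sum_sub_distrib, Finset.sum_mul, ← Finset.sum_sub_distrib]
      refine Finset.sum_congr rfl fun β _ => ?_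
      linear_combination (ω β) * hc_eq β
    have hkey : U (j+1) x - U (j+1) y
        = (U j x - U j y) * (1 - τ * ∑ β ∈ T, c β * ω β)
          + τ * (∑ β ∈ T, c β * ω β * (U j (x + ygrid d h β) - U j (y + ygrid d h β)))
          + τ * (f x - f y) := by
      rw [hUrec j x, hUrec j y, hDphT (U j) x, hDphT (U j) y]
      linear_combination τ * hsum_eq
    -- the estimates
    have hD := IH α γ
    have hW0 : (0:ℝ) ≤ Lu * ‖x - y‖ ^ a + (j:ℝ) * τ * (Lf * ‖x - y‖ ^ a) :=
      (abs_nonneg _).trans hD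
    have hS : ∀ β, |U j (x + ygrid d h β) - U j (y + ygrid d h β)| ≤
        Lu * ‖x - y‖ ^ a + (j:ℝ) * τ * (Lf * ‖x - y‖ ^ a) := by
      intro β
      have h1 := IH (α + β) (γ + β)
      rw [hxb β, hyb β] at h1
      rwa [add_sub_add_right_eq_sub] at h1
    have hfin : |U (j+1) x - U (j+1) y| ≤
        (Lu * ‖x - y‖ ^ a + (j:ℝ) * τ * (Lf * ‖x - y‖ ^ a)) + τ * (Lf * ‖x - y‖ ^ a) := by
      set W : ℝ := Lu * ‖x - y‖ ^ a + (j:ℝ) * τ * (Lf * ‖x - y‖ ^ a) with hWdef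
      set σ : ℝ := ∑ β ∈ T, c β * ω β with hσdef
      calc |U (j+1) x - U (j+1) y|
          = |(U j x - U j y) * (1 - τ * σ)
            + τ * (∑ β ∈ T, c β * ω β * (U j (x + ygrid d h β) - U j (y + ygrid d h β)))
            + τ * (f x - f y)| := by rw [hkey]
        _ ≤ |(U j x - U j y) * (1 - τ * σ)|
            + |τ * (∑ β ∈ T, c β * ω β * (U j (x + ygrid d h β) - U j (y + ygrid d h β)))|
            + |τ * (f x - f y)| := abs_add_three _ _ _
        _ ≤ W * (1 - τ * σ) + τ * σ * W + τ * (Lf * ‖x - y‖ ^ a) := by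
            have e1 : |(U j x - U j y) * (1 - τ * σ)| ≤ W * (1 - τ * σ) := by
              rw [abs_mul, abs_of_nonneg (by linarith : (0:ℝ) ≤ 1 - τ * σ)]
              exact mul_le_mul_of_nonneg_right hD (by linarith)
            have e2 : |τ * (∑ β ∈ T, c β * ω β *
                (U j (x + ygrid d h β) - U j (y + ygrid d h β)))| ≤ τ * σ * W := by
              rw [abs_mul, abs_of_pos hτ]
              rw [mul_assoc]
              apply mul_le_mul_of_nonneg_left _ hτ.le
              calc |∑ β ∈ T, c β * ω β * (U j (x + ygrid d h β) - U j (y + ygrid d h β))|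
                  ≤ ∑ β ∈ T, |c β * ω β * (U j (x + ygrid d h β) - U j (y + ygrid d h β))| :=
                    Finset.abs_sum_le_sum_abs _ _
                _ ≤ ∑ β ∈ T, c β * ω β * W := by
                    apply Finset.sum_le_sum
                    intro β _
                    rw [abs_mul, abs_of_nonneg (mul_nonneg (hc0 β) (hnn β))]
                    exact mul_le_mul_of_nonneg_left (hS β) (mul_nonneg (hc0 β) (hnn β))
                _ = σ * W := by rw [hσdef, Finset.sum_mul]
            have e3 : |τ * (f x - f y)| ≤ τ * (Lf * ‖x - y‖ ^ a) := by
              rw [abs_mul, abs_of_pos hτ]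
              exact mul_le_mul_of_nonneg_left (hf x y) hτ.le
            linarith
        _ = W + τ * (Lf * ‖x - y‖ ^ a) := by ring
    push_cast
    calc |U (j+1) x - U (j+1) y| ≤
        (Lu * ‖x - y‖ ^ a + (j:ℝ) * τ * (Lf * ‖x - y‖ ^ a)) + τ * (Lf * ‖x - y‖ ^ a) := hfin
      _ = Lu * ‖x - y‖ ^ a + ((j:ℝ) + 1) * τ * (Lf * ‖x - y‖ ^ a) := by ring
end

section
/- Assume the CFL condition. Then for all j, k ≥ 0 with j + k ≤ N, the extended scheme satisfies sup_{x∈ℝ^d} |U^{j+k}(x) − U^j(x)| ≤ t_k (‖D_p^h u₀‖_{L^∞(ℝ^d)} + ‖f‖_{L^∞(ℝ^d)}), where t_k = kτ. -/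
open scoped BigOperators

open Filter Topology

set_option maxHeartbeats 1000000

lemma Jp_two : Jp 2 = id := by
  funext x; simp [Jp]

lemma Jp_hasDerivAt {p : ℝ} (hp : 2 ≤ p) (c : ℝ) :
    HasDerivAt (Jp p) ((p - 1) * |c| ^ (p - 2)) c := by
  rcases eq_or_lt_of_le hp with hp2 | hp2
  · have h1 : (p - 1) * |c| ^ (p - 2) = 1 := by rw [← hp2]; norm_num
    rw [h1, ← hp2, Jp_two]
    exact hasDerivAt_id c
  · rcases eq_or_ne c 0 with rfl | hc
    · rw [hasDerivAt_iff_tendsto_slope]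
      have h0 : (p - 1) * |(0:ℝ)| ^ (p - 2) = 0 := by
        rw [abs_zero, Real.zero_rpow (by linarith), mul_zero]
      rw [h0]
      have hcont : ContinuousAt (fun x : ℝ => |x| ^ (p - 2)) 0 :=
        (Real.continuousAt_rpow_const _ _ (Or.inr (by linarith))).comp continuous_abs.continuousAt
      have htend : Tendsto (fun x : ℝ => |x| ^ (p - 2)) (𝓝[≠] (0:ℝ)) (𝓝 0) := by
        have h2 := hcont.tendsto.mono_left (nhdsWithin_le_nhds (s := {(0:ℝ)}ᶜ))
        simpa [Real.zero_rpow (show p - 2 ≠ 0 by linarith)] using h2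
      refine htend.congr' ?_
      filter_upwards [self_mem_nhdsWithin] with x hx
      have hx' : x ≠ 0 := hx
      simp only [slope, Jp, sub_zero, abs_zero, Real.zero_rpow (show p - 2 ≠ 0 by linarith),
        mul_zero, zero_mul, vsub_eq_sub, sub_zero]
      rw [smul_eq_mul]; field_simp
    · have habs := hasDerivAt_abs hc
      have hr : HasDerivAt (fun y : ℝ => y ^ (p - 2)) ((p - 2) * |c| ^ (p - 2 - 1)) |c| :=
        Real.hasDerivAt_rpow_const (Or.inl (abs_ne_zero.mpr hc))
      have hF : HasDerivAt (fun ξ : ℝ => |ξ| ^ (p - 2))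
          ((p - 2) * |c| ^ (p - 2 - 1) * (SignType.sign c : ℝ)) c := hr.comp c habs
      have hprod := hF.mul (hasDerivAt_id c)
      have hs : (SignType.sign c : ℝ) * c = |c| := sign_mul_self c
      have h1 : |c| ^ (p - 2 - 1) * |c| = |c| ^ (p - 2) := by
        rw [← Real.rpow_add_one (abs_ne_zero.mpr hc)]; ring_nf
      refine hprod.congr_deriv ?_
      simp only [id_eq, mul_one]
      linear_combination ((p - 2) * |c| ^ (p - 2 - 1)) * hs + (p - 2) * h1

lemma Jp_continuous {p : ℝ} (hp : 2 ≤ p) : Continuous (Jp p) :=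
  continuous_iff_continuousAt.mpr fun x => (Jp_hasDerivAt hp x).continuousAt

lemma Jp_diff_aux {p : ℝ} (hp : 2 ≤ p) {K A B : ℝ} (hA : |A| ≤ K) (hB : |B| ≤ K)
    (hBA : B < A) :
    ∃ g, 0 ≤ g ∧ g ≤ (p - 1) * K ^ (p - 2) ∧ Jp p A - Jp p B = g * (A - B) := by
  obtain ⟨c, hc, hceq⟩ := exists_hasDerivAt_eq_slope (Jp p) (fun c => (p - 1) * |c| ^ (p - 2))
    hBA ((Jp_continuous hp).continuousOn) (fun x _ => Jp_hasDerivAt hp x)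
  refine ⟨(p - 1) * |c| ^ (p - 2),
    mul_nonneg (by linarith) (Real.rpow_nonneg (abs_nonneg c) _), ?_, ?_⟩
  · have hcK : |c| ≤ K := by
      rw [abs_le]; rw [abs_le] at hA hB
      constructor <;> [linarith [hc.1]; linarith [hc.2]]
    exact mul_le_mul_of_nonneg_left (Real.rpow_le_rpow (abs_nonneg c) hcK (by linarith))
      (by linarith)
  · rw [hceq]
    rw [div_mul_cancel₀ _ (by intro h0; rw [sub_eq_zero] at h0; exact absurd h0.symm hBA.ne : A - B ≠ 0)]

lemma Jp_diff {p : ℝ} (hp : 2 ≤ p) {K A B : ℝ} (hA : |A| ≤ K) (hB : |B| ≤ K) :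
    ∃ g, 0 ≤ g ∧ g ≤ (p - 1) * K ^ (p - 2) ∧ Jp p A - Jp p B = g * (A - B) := by
  have hK : 0 ≤ K := le_trans (abs_nonneg A) hA
  rcases lt_trichotomy A B with hlt | heq | hgt
  · obtain ⟨g, h0, h1, h2⟩ := Jp_diff_aux hp hB hA hlt
    exact ⟨g, h0, h1, by linarith [h2]⟩
  · subst heq
    exact ⟨0, le_refl 0, mul_nonneg (by linarith) (Real.rpow_nonneg hK _), by ring⟩
  · exact Jp_diff_aux hp hA hB hgt

lemma euclid_apply_le_norm {d : ℕ} (x : EuclideanSpace ℝ (Fin d)) (i : Fin d) :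
    |x i| ≤ ‖x‖ := by
  rw [EuclideanSpace.norm_eq]
  have h1 : ‖x i‖ ^ 2 ≤ ∑ j, ‖x j‖ ^ 2 :=
    Finset.single_le_sum (f := fun j => ‖x j‖ ^ 2) (fun j _ => sq_nonneg _) (Finset.mem_univ i)
  calc |x i| = Real.sqrt (‖x i‖ ^ 2) := by
        rw [Real.sqrt_sq (norm_nonneg _)]; exact (Real.norm_eq_abs _).symm
    _ ≤ _ := Real.sqrt_le_sqrt h1

lemma support_finite {d : ℕ} {h r : ℝ} (hh : 0 < h) {ω : (Fin d → ℤ) → ℝ}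
    (hzero : ∀ β, r ≤ ‖ygrid d h β‖ → ω β = 0) :
    (Function.support ω).Finite := by
  apply Set.Finite.subset (Set.finite_Icc (fun _ : Fin d => -⌈r / h⌉) (fun _ => ⌈r / h⌉))
  intro β hβ
  have hlt : ‖ygrid d h β‖ < r := lt_of_not_ge fun hle => hβ (hzero β hle)
  have hcomp : ∀ i, |(β i : ℝ)| ≤ r / h := by
    intro i
    have h1 : |ygrid d h β i| ≤ ‖ygrid d h β‖ := euclid_apply_le_norm _ i
    have h2 : ygrid d h β i = h * (β i : ℝ) := rfl
    rw [h2, abs_mul, abs_of_pos hh] at h1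
    rw [le_div_iff₀ hh]
    calc |(β i : ℝ)| * h = h * |(β i : ℝ)| := by ring
      _ ≤ ‖ygrid d h β‖ := h1
      _ ≤ r := hlt.le
  constructor <;> (intro i) <;> (have := hcomp i; rw [abs_le] at this)
  · have h2 : -(r / h) ≤ (β i : ℝ) := this.1
    have h3 : ((-⌈r / h⌉ : ℤ) : ℝ) ≤ (β i : ℝ) := by
      push_cast
      calc -((⌈r / h⌉ : ℤ) : ℝ) ≤ -(r / h) := by have := Int.le_ceil (r / h); linarith
        _ ≤ _ := h2
    exact_mod_cast h3
  · have h3 : (β i : ℝ) ≤ ((⌈r / h⌉ : ℤ) : ℝ) := le_trans this.2 (Int.le_ceil _)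
    exact_mod_cast h3

lemma Dph_eq_sum {d : ℕ} {p h : ℝ} {ω : (Fin d → ℤ) → ℝ}
    (hfin : (Function.support ω).Finite) (ψ : EuclideanSpace ℝ (Fin d) → ℝ)
    (x : EuclideanSpace ℝ (Fin d)) :
    Dph d p h ω ψ x = ∑ β ∈ hfin.toFinset, Jp p (ψ (x + ygrid d h β) - ψ x) * ω β := by
  apply finsum_eq_sum_of_support_subset
  intro β hβ
  rw [Function.mem_support] at hβ
  rw [Set.Finite.coe_toFinset, Function.mem_support]
  intro hω
  exact hβ (by rw [hω, mul_zero])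

/-- The core comparison ("monotone scheme") lemma. -/
lemma core_compare {d : ℕ} {p h τ : ℝ} (hp : 2 ≤ p) (hτ : 0 < τ)
    {ω : (Fin d → ℤ) → ℝ} (hnn : ∀ β, 0 ≤ ω β)
    (hfin : (Function.support ω).Finite)
    {K θ : ℝ} (hθ : 0 ≤ θ)
    (hcoef : τ * ((p - 1) * K ^ (p - 2)) * ∑ β ∈ hfin.toFinset, ω β ≤ 1)
    {v w : EuclideanSpace ℝ (Fin d) → ℝ}
    (hv : ∀ x β, ω β ≠ 0 → |v (x + ygrid d h β) - v x| ≤ K)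
    (hw : ∀ x β, ω β ≠ 0 → |w (x + ygrid d h β) - w x| ≤ K)
    (hvw : ∀ z, |v z - w z| ≤ θ) (x : EuclideanSpace ℝ (Fin d)) :
    |(v x + τ * Dph d p h ω v x) - (w x + τ * Dph d p h ω w x)| ≤ θ := by
  classical
  set S := hfin.toFinset with hS
  have hmem : ∀ β ∈ S, ω β ≠ 0 := fun β hβ => hfin.mem_toFinset.mp hβ
  have key : ∀ β, ∃ gβ, 0 ≤ gβ ∧ (ω β ≠ 0 →
      gβ ≤ (p - 1) * K ^ (p - 2) ∧
      Jp p (v (x + ygrid d h β) - v x) - Jp p (w (x + ygrid d h β) - w x) =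
        gβ * ((v (x + ygrid d h β) - v x) - (w (x + ygrid d h β) - w x))) := by
    intro β
    by_cases hβ : ω β ≠ 0
    · obtain ⟨g, h0, h1, h2⟩ := Jp_diff hp (hv x β hβ) (hw x β hβ)
      exact ⟨g, h0, fun _ => ⟨h1, h2⟩⟩
    · exact ⟨0, le_refl 0, fun hc => absurd hc hβ⟩
  choose g hg0 hg2 using key
  set c : ℝ := ∑ β ∈ S, g β * ω β with hc
  have hc0 : 0 ≤ c := Finset.sum_nonneg fun β _ => mul_nonneg (hg0 β) (hnn β)
  have hc1 : τ * c ≤ 1 := by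
    have hle : c ≤ ((p - 1) * K ^ (p - 2)) * ∑ β ∈ S, ω β := by
      rw [Finset.mul_sum]
      exact Finset.sum_le_sum fun β hβ =>
        mul_le_mul_of_nonneg_right ((hg2 β (hmem β hβ)).1) (hnn β)
    calc τ * c ≤ τ * (((p - 1) * K ^ (p - 2)) * ∑ β ∈ S, ω β) :=
          mul_le_mul_of_nonneg_left hle hτ.le
      _ = τ * ((p - 1) * K ^ (p - 2)) * ∑ β ∈ S, ω β := by ring
      _ ≤ 1 := hcoef
  have hD : Dph d p h ω v x - Dph d p h ω w x =
      (∑ β ∈ S, g β * ω β * (v (x + ygrid d h β) - w (x + ygrid d h β))) - c * (v x - w x) := by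
    rw [Dph_eq_sum hfin v x, Dph_eq_sum hfin w x, ← Finset.sum_sub_distrib, hc,
      Finset.sum_mul, ← Finset.sum_sub_distrib]
    refine Finset.sum_congr rfl fun β hβ => ?_
    have heq := (hg2 β (hmem β hβ)).2
    linear_combination (ω β) * heq
  have hid : (v x + τ * Dph d p h ω v x) - (w x + τ * Dph d p h ω w x) =
      (1 - τ * c) * (v x - w x) +
        τ * ∑ β ∈ S, g β * ω β * (v (x + ygrid d h β) - w (x + ygrid d h β)) := by
    linear_combination τ * hD
  rw [hid]
  have hb2 : |∑ β ∈ S, g β * ω β * (v (x + ygrid d h β) - w (x + ygrid d h β))| ≤ c * θ := by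
    calc |∑ β ∈ S, g β * ω β * (v (x + ygrid d h β) - w (x + ygrid d h β))|
        ≤ ∑ β ∈ S, |g β * ω β * (v (x + ygrid d h β) - w (x + ygrid d h β))| :=
          Finset.abs_sum_le_sum_abs _ _
      _ ≤ ∑ β ∈ S, g β * ω β * θ := by
          refine Finset.sum_le_sum fun β hβ => ?_
          rw [abs_mul, abs_of_nonneg (mul_nonneg (hg0 β) (hnn β))]
          exact mul_le_mul_of_nonneg_left (hvw _) (mul_nonneg (hg0 β) (hnn β))
      _ = c * θ := by rw [hc, Finset.sum_mul]
  calc |(1 - τ * c) * (v x - w x) +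
        τ * ∑ β ∈ S, g β * ω β * (v (x + ygrid d h β) - w (x + ygrid d h β))|
      ≤ |(1 - τ * c) * (v x - w x)| +
        |τ * ∑ β ∈ S, g β * ω β * (v (x + ygrid d h β) - w (x + ygrid d h β))| := abs_add_le _ _
    _ ≤ (1 - τ * c) * θ + τ * (c * θ) := by
        refine add_le_add ?_ ?_
        · rw [abs_mul, abs_of_nonneg (by linarith : (0:ℝ) ≤ 1 - τ * c)]
          exact mul_le_mul_of_nonneg_left (hvw x) (by linarith)
        · rw [abs_mul, abs_of_nonneg hτ.le]
          exact mul_le_mul_of_nonneg_left hb2 hτ.le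
    _ = θ := by ring

/-- Discrete equicontinuity in time: `‖U^{j+k} - U^j‖_∞ ≤ t_k (‖D_p^h u₀‖_∞ + ‖f‖_∞)`. -/
theorem scheme_time_increment_bound (d : ℕ) (hd : 1 ≤ d) (p : ℝ) (hp : 2 ≤ p)
    (h r τ : ℝ) (hh : 0 < h) (hr : 0 < r) (hτ : 0 < τ) (N : ℕ) (M : ℝ) (hM : 0 < M)
    (ω : (Fin d → ℤ) → ℝ) (hsym : ∀ β, ω (-β) = ω β) (hnn : ∀ β, 0 ≤ ω β)
    (hzero : ∀ β, r ≤ ‖ygrid d h β‖ → ω β = 0)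
    (hsum : ∑ᶠ β, ω β ≤ M * r ^ (-p))
    (a Lu Lf : ℝ) (ha0 : 0 < a) (ha1 : a ≤ 1)
    (u₀ f : EuclideanSpace ℝ (Fin d) → ℝ)
    (hu₀b : BddAbove (Set.range fun x => |u₀ x|))
    (hfb : BddAbove (Set.range fun x => |f x|))
    (hu₀ : ∀ x y, |u₀ x - u₀ y| ≤ Lu * ‖x - y‖ ^ a)
    (hf : ∀ x y, |f x - f y| ≤ Lf * ‖x - y‖ ^ a)
    (U : ℕ → EuclideanSpace ℝ (Fin d) → ℝ)
    (hU0 : ∀ x, U 0 x = u₀ x)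
    (hUrec : ∀ j x, U (j + 1) x = U j x + τ * (Dph d p h ω (U j) x + f x))
    (hCFL : τ * (p - 1) * M * (Lu + (N : ℝ) * τ * Lf) ^ (p - 2) ≤
      r ^ (2 + (1 - a) * (p - 2))) :
    ∀ j k, j + k ≤ N → ∀ x,
      |U (j + k) x - U j x| ≤
        (k : ℝ) * τ * ((⨆ x, |Dph d p h ω u₀ x|) + ⨆ x, |f x|) := by
  classical
  have hfin : (Function.support ω).Finite := support_finite hh hzero
  set S := hfin.toFinset with hSdef
  -- nonnegativity of the Hölder constants
  have hone : ∃ z : EuclideanSpace ℝ (Fin d), ‖z‖ = 1 :=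
    ⟨EuclideanSpace.single ⟨0, hd⟩ (1:ℝ), by simp [EuclideanSpace.norm_single]⟩
  obtain ⟨z₁, hz₁⟩ := hone
  have hLu : 0 ≤ Lu := by
    have := hu₀ z₁ 0
    rw [sub_zero, hz₁, Real.one_rpow, mul_one] at this
    exact le_trans (abs_nonneg _) this
  have hLf : 0 ≤ Lf := by
    have := hf z₁ 0
    rw [sub_zero, hz₁, Real.one_rpow, mul_one] at this
    exact le_trans (abs_nonneg _) this
  set H : ℝ := Lu + (N : ℝ) * τ * Lf with hHdef
  have hH : 0 ≤ H := by positivity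
  set K : ℝ := H * r ^ a with hKdef
  have hK0 : 0 ≤ K := mul_nonneg hH (Real.rpow_nonneg hr.le a)
  -- the CFL-derived coefficient bound
  have hSig0 : 0 ≤ ∑ β ∈ S, ω β := Finset.sum_nonneg fun β _ => hnn β
  have hSig : ∑ β ∈ S, ω β ≤ M * r ^ (-p) := by
    rw [hSdef, ← finsum_eq_sum ω hfin]; exact hsum
  have hcoef : τ * ((p - 1) * K ^ (p - 2)) * ∑ β ∈ S, ω β ≤ 1 := by
    have e1 : K ^ (p - 2) = H ^ (p - 2) * r ^ (a * (p - 2)) := by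
      rw [hKdef, Real.mul_rpow hH (Real.rpow_nonneg hr.le a), ← Real.rpow_mul hr.le]
    have e2 : r ^ (2 + (1 - a) * (p - 2)) * (r ^ (a * (p - 2)) * r ^ (-p)) = 1 := by
      rw [← Real.rpow_add hr, ← Real.rpow_add hr,
        show 2 + (1 - a) * (p - 2) + (a * (p - 2) + -p) = 0 by ring, Real.rpow_zero]
    have hpos : (0:ℝ) ≤ τ * (p - 1) * H ^ (p - 2) :=
      mul_nonneg (mul_nonneg hτ.le (by linarith)) (Real.rpow_nonneg hH _)
    calc τ * ((p - 1) * K ^ (p - 2)) * ∑ β ∈ S, ω β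
        = (τ * (p - 1) * H ^ (p - 2) * ∑ β ∈ S, ω β) * r ^ (a * (p - 2)) := by
          rw [e1]; ring
      _ ≤ (τ * (p - 1) * H ^ (p - 2) * (M * r ^ (-p))) * r ^ (a * (p - 2)) := by
          refine mul_le_mul_of_nonneg_right (mul_le_mul_of_nonneg_left hSig hpos)
            (Real.rpow_nonneg hr.le _)
      _ = (τ * (p - 1) * M * H ^ (p - 2)) * (r ^ (a * (p - 2)) * r ^ (-p)) := by ring
      _ ≤ r ^ (2 + (1 - a) * (p - 2)) * (r ^ (a * (p - 2)) * r ^ (-p)) := by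
          refine mul_le_mul_of_nonneg_right hCFL
            (mul_nonneg (Real.rpow_nonneg hr.le _) (Real.rpow_nonneg hr.le _))
      _ = 1 := e2
  -- Hölder regularity propagation
  have hHold : ∀ j, j ≤ N → ∀ x y,
      |U j x - U j y| ≤ (Lu + (j : ℝ) * τ * Lf) * ‖x - y‖ ^ a := by
    intro j
    induction j with
    | zero =>
      intro _ x y
      rw [hU0, hU0]
      calc |u₀ x - u₀ y| ≤ Lu * ‖x - y‖ ^ a := hu₀ x y
        _ = (Lu + (0 : ℕ) * τ * Lf) * ‖x - y‖ ^ a := by norm_num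
    | succ j IH =>
      intro hjN x y
      have hjN' : j ≤ N := by omega
      have IH' := IH hjN'
      set Cj : ℝ := Lu + (j : ℝ) * τ * Lf with hCj
      have hCj0 : 0 ≤ Cj := by positivity
      have hCjH : Cj ≤ H := by
        rw [hCj, hHdef]
        have hjr : (j : ℝ) ≤ (N : ℝ) := by exact_mod_cast hjN'
        nlinarith [mul_nonneg (mul_nonneg (sub_nonneg.mpr hjr) hτ.le) hLf]
      set w : EuclideanSpace ℝ (Fin d) → ℝ := fun z => U j (z + (y - x)) with hwdef
      have hincr : ∀ z (β : Fin d → ℤ), ω β ≠ 0 →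
          |U j (z + ygrid d h β) - U j z| ≤ K := by
        intro z β hβ
        have hyβ : ‖ygrid d h β‖ < r := lt_of_not_ge fun hle => hβ (hzero β hle)
        calc |U j (z + ygrid d h β) - U j z| ≤ Cj * ‖z + ygrid d h β - z‖ ^ a := IH' _ _
          _ = Cj * ‖ygrid d h β‖ ^ a := by rw [add_sub_cancel_left]
          _ ≤ H * r ^ a := by
              refine mul_le_mul hCjH (Real.rpow_le_rpow (norm_nonneg _) hyβ.le ha0.le)
                (Real.rpow_nonneg (norm_nonneg _) _) hH
      have hw : ∀ z (β : Fin d → ℤ), ω β ≠ 0 →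
          |w (z + ygrid d h β) - w z| ≤ K := by
        intro z β hβ
        have e : z + ygrid d h β + (y - x) = (z + (y - x)) + ygrid d h β := by abel
        simpa [hwdef, e] using hincr (z + (y - x)) β hβ
      set θ : ℝ := Cj * ‖x - y‖ ^ a with hθdef
      have hθ0 : 0 ≤ θ := mul_nonneg hCj0 (Real.rpow_nonneg (norm_nonneg _) _)
      have hvw : ∀ z, |U j z - w z| ≤ θ := by
        intro z
        have e : z - (z + (y - x)) = x - y := by abel
        calc |U j z - w z| ≤ Cj * ‖z - (z + (y - x))‖ ^ a := IH' _ _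
          _ = θ := by rw [e]
      have hcore := core_compare hp hτ hnn hfin hθ0 hcoef hincr hw hvw x
      have hwx : w x = U j y := congrArg (U j) (by abel : x + (y - x) = y)
      have hDw : Dph d p h ω w x = Dph d p h ω (U j) y := by
        unfold Dph
        refine finsum_congr fun β => ?_
        have e1 : w (x + ygrid d h β) = U j (y + ygrid d h β) :=
          congrArg (U j) (by abel : x + ygrid d h β + (y - x) = y + ygrid d h β)
        rw [e1, hwx]
      rw [hwx, hDw] at hcore
      have hstep : U (j + 1) x - U (j + 1) y =
          ((U j x + τ * Dph d p h ω (U j) x) - (U j y + τ * Dph d p h ω (U j) y)) +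
            τ * (f x - f y) := by
        rw [hUrec j x, hUrec j y]; ring
      calc |U (j + 1) x - U (j + 1) y|
          ≤ |(U j x + τ * Dph d p h ω (U j) x) - (U j y + τ * Dph d p h ω (U j) y)| +
            |τ * (f x - f y)| := by rw [hstep]; exact abs_add_le _ _
        _ ≤ θ + τ * (Lf * ‖x - y‖ ^ a) := by
            refine add_le_add hcore ?_
            rw [abs_mul, abs_of_nonneg hτ.le]
            exact mul_le_mul_of_nonneg_left (hf x y) hτ.le
        _ = (Lu + ((j : ℕ) + 1 : ℕ) * τ * Lf) * ‖x - y‖ ^ a := by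
            rw [hθdef, hCj]; push_cast; ring
  -- the supremum constants
  have hne : Nonempty (EuclideanSpace ℝ (Fin d)) := ⟨0⟩
  obtain ⟨B, hB⟩ := hu₀b
  have hB' : ∀ x, |u₀ x| ≤ B := fun x => hB (Set.mem_range_self x)
  have hB0 : 0 ≤ B := le_trans (abs_nonneg _) (hB' 0)
  have hDbdd : BddAbove (Set.range fun x => |Dph d p h ω u₀ x|) := by
    refine ⟨∑ β ∈ S, (2 * B) ^ (p - 2) * (2 * B) * ω β, ?_⟩
    rintro _ ⟨x, rfl⟩
    show |Dph d p h ω u₀ x| ≤ _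
    rw [Dph_eq_sum hfin u₀ x]
    refine le_trans (Finset.abs_sum_le_sum_abs _ _) (Finset.sum_le_sum fun β hβ => ?_)
    rw [abs_mul, abs_of_nonneg (hnn β)]
    refine mul_le_mul_of_nonneg_right ?_ (hnn β)
    have hξ : |u₀ (x + ygrid d h β) - u₀ x| ≤ 2 * B := by
      calc |u₀ (x + ygrid d h β) - u₀ x| ≤ |u₀ (x + ygrid d h β)| + |u₀ x| := abs_sub _ _
        _ ≤ 2 * B := by have := hB' (x + ygrid d h β); have := hB' x; linarith
    calc |Jp p (u₀ (x + ygrid d h β) - u₀ x)|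
        = |u₀ (x + ygrid d h β) - u₀ x| ^ (p - 2) * |u₀ (x + ygrid d h β) - u₀ x| := by
          rw [Jp, abs_mul, abs_of_nonneg (Real.rpow_nonneg (abs_nonneg _) _)]
      _ ≤ (2 * B) ^ (p - 2) * (2 * B) :=
          mul_le_mul (Real.rpow_le_rpow (abs_nonneg _) hξ (by linarith)) hξ (abs_nonneg _)
            (Real.rpow_nonneg (by linarith) _)
  set DS : ℝ := ⨆ x, |Dph d p h ω u₀ x| with hDS
  set FS : ℝ := ⨆ x, |f x| with hFS
  have hDS0 : 0 ≤ DS := le_trans (abs_nonneg _) (le_ciSup hDbdd 0)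
  have hFS0 : 0 ≤ FS := le_trans (abs_nonneg _) (le_ciSup hfb 0)
  set C : ℝ := DS + FS with hC
  have hC0 : 0 ≤ C := by positivity
  -- single time step bound
  have hstep : ∀ j, j + 1 ≤ N → ∀ x, |U (j + 1) x - U j x| ≤ τ * C := by
    intro j
    induction j with
    | zero =>
      intro _ x
      have hU0' : U 0 = u₀ := funext hU0
      have : U 1 x - U 0 x = τ * (Dph d p h ω u₀ x + f x) := by
        rw [hUrec 0 x, hU0']; ring
      rw [show (0:ℕ) + 1 = 1 from rfl, this, abs_mul, abs_of_nonneg hτ.le]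
      refine mul_le_mul_of_nonneg_left ?_ hτ.le
      calc |Dph d p h ω u₀ x + f x| ≤ |Dph d p h ω u₀ x| + |f x| := abs_add_le _ _
        _ ≤ DS + FS := add_le_add (le_ciSup hDbdd x) (le_ciSup hfb x)
    | succ j IH =>
      intro hjN x
      have hIH := IH (by omega)
      have hv : ∀ z (β : Fin d → ℤ), ω β ≠ 0 →
          |U (j + 1) (z + ygrid d h β) - U (j + 1) z| ≤ K := by
        intro z β hβ
        have hyβ : ‖ygrid d h β‖ < r := lt_of_not_ge fun hle => hβ (hzero β hle)
        have hCjH : Lu + ((j:ℝ) + 1) * τ * Lf ≤ H := by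
          rw [hHdef]
          have hjr : ((j:ℝ) + 1) ≤ (N : ℝ) := by
            have hj' : (j:ℕ) + 1 ≤ N := by omega
            exact_mod_cast hj'
          nlinarith [mul_nonneg (mul_nonneg (sub_nonneg.mpr hjr) hτ.le) hLf]
        calc |U (j + 1) (z + ygrid d h β) - U (j + 1) z|
            ≤ (Lu + ((j:ℕ)+1 : ℕ) * τ * Lf) * ‖z + ygrid d h β - z‖ ^ a :=
              hHold (j + 1) (by omega) _ _
          _ = (Lu + ((j:ℝ) + 1) * τ * Lf) * ‖ygrid d h β‖ ^ a := by
              rw [add_sub_cancel_left]; push_cast; ring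
          _ ≤ H * r ^ a := by
              refine mul_le_mul hCjH (Real.rpow_le_rpow (norm_nonneg _) hyβ.le ha0.le)
                (Real.rpow_nonneg (norm_nonneg _) _) hH
      have hw : ∀ z (β : Fin d → ℤ), ω β ≠ 0 →
          |U j (z + ygrid d h β) - U j z| ≤ K := by
        intro z β hβ
        have hyβ : ‖ygrid d h β‖ < r := lt_of_not_ge fun hle => hβ (hzero β hle)
        have hCjH : Lu + (j:ℝ) * τ * Lf ≤ H := by
          rw [hHdef]
          have hjr : ((j:ℝ)) ≤ (N : ℝ) := by
            have hj' : (j:ℕ) ≤ N := by omega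
            exact_mod_cast hj'
          nlinarith [mul_nonneg (mul_nonneg (sub_nonneg.mpr hjr) hτ.le) hLf]
        calc |U j (z + ygrid d h β) - U j z|
            ≤ (Lu + (j : ℝ) * τ * Lf) * ‖z + ygrid d h β - z‖ ^ a :=
              hHold j (by omega) _ _
          _ = (Lu + (j:ℝ) * τ * Lf) * ‖ygrid d h β‖ ^ a := by rw [add_sub_cancel_left]
          _ ≤ H * r ^ a := by
              refine mul_le_mul hCjH (Real.rpow_le_rpow (norm_nonneg _) hyβ.le ha0.le)
                (Real.rpow_nonneg (norm_nonneg _) _) hH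
      have hvw : ∀ z, |U (j + 1) z - U j z| ≤ τ * C := hIH
      have hcore := core_compare hp hτ hnn hfin (by positivity) hcoef hv hw hvw x
      have hdiff : U (j + 1 + 1) x - U (j + 1) x =
          (U (j + 1) x + τ * Dph d p h ω (U (j + 1)) x) -
            (U j x + τ * Dph d p h ω (U j) x) := by
        rw [hUrec (j + 1) x, hUrec j x]; ring
      rw [hdiff]
      exact hcore
  -- conclusion by telescoping
  intro j k hjk x
  induction k with
  | zero => simp
  | succ k IHk =>
    have h1 : |U (j + (k + 1)) x - U (j + k) x| ≤ τ * C := by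
      have := hstep (j + k) (by omega) x
      convert this using 3 <;> rw [Nat.add_assoc]
    have h2 := IHk (by omega)
    calc |U (j + (k + 1)) x - U j x|
        ≤ |U (j + (k + 1)) x - U (j + k) x| + |U (j + k) x - U j x| := abs_sub_le _ _ _
      _ ≤ τ * C + (k : ℝ) * τ * C := add_le_add h1 h2
      _ = ((k : ℕ) + 1 : ℕ) * τ * C := by push_cast; ring
end

section
/- Let v : ℝ^d → ℝ be bounded and suppose there are constants C₁, C₂ ≥ 0 such that |v(x+y) − v(x)| ≤ C₁|y| and |v(x+y) + v(x−y) − 2v(x)| ≤ C₂|y|² for all x, y ∈ ℝ^d. If moreover Σ_β ω_β ≤ M r^{−p} for a constant M > 0, then for every x ∈ ℝ^d, |D_p^h v(x)| ≤ ((p−1)/2) C₁^{p−2} C₂ Σ_{β∈ℤ^d} |y_β|^p ω_β ≤ ((p−1)/2) C₁^{p−2} C₂ M. -/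
open scoped BigOperators

/- ### Auxiliary elementary inequalities -/

lemma bern_aux {t s : ℝ} (ht0 : 0 ≤ t) (ht1 : t ≤ 1) (hs : 1 ≤ s) :
    1 - t ^ s ≤ s * (1 - t) := by
  have h := one_add_mul_self_le_rpow_one_add (s := t - 1) (by linarith) hs
  have ht : (1 : ℝ) + (t - 1) = t := by ring
  rw [ht] at h
  nlinarith

lemma rpow_sub_le_aux {q a c : ℝ} (hq : 0 ≤ q) (hc : 0 ≤ c) (hca : c ≤ a) :
    a ^ q * a - c ^ q * c ≤ (q + 1) * (a ^ q * (a - c)) := by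
  have ha : 0 ≤ a := hc.trans hca
  rcases eq_or_lt_of_le ha with h0 | h0
  · have hc0 : c = 0 := le_antisymm (by linarith) hc
    simp [← h0, hc0]
  · set t := c / a with htdef
    have ht0 : 0 ≤ t := div_nonneg hc h0.le
    have ht1 : t ≤ 1 := (div_le_one h0).2 hca
    have hct : c = t * a := by rw [htdef, div_mul_cancel₀ c h0.ne']
    have hcq : c ^ q * c = t ^ q * t * (a ^ q * a) := by
      rw [hct, Real.mul_rpow ht0 h0.le]; ring
    have haq : 0 < a ^ q * a := mul_pos (Real.rpow_pos_of_pos h0 q) h0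
    have hkey : 1 - t ^ q * t ≤ (q + 1) * (1 - t) := by
      rcases eq_or_lt_of_le ht0 with h0t | h0t
      · rw [← h0t, mul_zero]
        nlinarith
      · have htq : t ^ q * t = t ^ (q + 1) := by
          rw [Real.rpow_add h0t, Real.rpow_one]
        rw [htq]
        exact bern_aux ht0 ht1 (by linarith)
    have hac : a - c = (1 - t) * a := by rw [hct]; ring
    rw [hcq, hac]
    nlinarith

lemma key1_aux {q a c : ℝ} (hq : 0 ≤ q) (hca : |c| ≤ a) :
    |a| ^ q * a - |c| ^ q * c ≤ (q + 1) * (a ^ q * (a - c)) := by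
  have ha : 0 ≤ a := (abs_nonneg c).trans hca
  rw [abs_of_nonneg ha]
  rcases le_or_gt 0 c with hc | hc
  · have hca' : c ≤ a := (le_abs_self c).trans hca
    rw [abs_of_nonneg hc]
    exact rpow_sub_le_aux hq hc hca'
  · rw [abs_of_neg hc]
    have hcabs : -c ≤ a := by rw [abs_of_neg hc] at hca; exact hca
    have h1 : (-c) ^ q ≤ a ^ q := Real.rpow_le_rpow (by linarith) hcabs hq
    have h2 : 0 ≤ a ^ q := Real.rpow_nonneg ha q
    have h3 : 0 ≤ (-c) ^ q := Real.rpow_nonneg (by linarith) q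
    have h4 : (-c) ^ q * (-c) ≤ a ^ q * (-c) :=
      mul_le_mul_of_nonneg_right h1 (by linarith)
    have h5 : 0 ≤ a ^ q * (a - c) := mul_nonneg h2 (by linarith)
    nlinarith

lemma key1lb_aux {q a c : ℝ} (hq : 0 ≤ q) (hca : |c| ≤ a) :
    |c| ^ q * c ≤ |a| ^ q * a := by
  have ha : 0 ≤ a := (abs_nonneg c).trans hca
  rw [abs_of_nonneg ha]
  have h1 : |c| ^ q * c ≤ |c| ^ q * |c| :=
    mul_le_mul_of_nonneg_left (le_abs_self c) (Real.rpow_nonneg (abs_nonneg c) q)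
  have h2 : |c| ^ q * |c| ≤ a ^ q * a :=
    mul_le_mul (Real.rpow_le_rpow (abs_nonneg c) hca hq) hca (abs_nonneg c)
      (Real.rpow_nonneg ha q)
  linarith

lemma key3_pos {q a c : ℝ} (hq : 0 ≤ q) (ha : 0 ≤ a) (hca : |c| ≤ a) :
    |(|a| ^ q * a) - (|c| ^ q * c)| ≤ (q + 1) * (|a| ^ q * |a - c|) := by
  have hcle : c ≤ a := (le_abs_self c).trans hca
  have hnn : 0 ≤ |a| ^ q * a - |c| ^ q * c :=
    sub_nonneg.2 (key1lb_aux hq hca)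
  rw [abs_of_nonneg hnn, abs_of_nonneg (sub_nonneg.2 hcle)]
  calc |a| ^ q * a - |c| ^ q * c ≤ (q + 1) * (a ^ q * (a - c)) := key1_aux hq hca
    _ = (q + 1) * (|a| ^ q * (a - c)) := by rw [abs_of_nonneg ha]

lemma key3_aux {q a c : ℝ} (hq : 0 ≤ q) (hca : |c| ≤ |a|) :
    |(|a| ^ q * a) - (|c| ^ q * c)| ≤ (q + 1) * (|a| ^ q * |a - c|) := by
  rcases le_or_gt 0 a with ha | ha
  · rw [abs_of_nonneg ha] at hca; exact key3_pos hq ha hca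
  · have hca' : |(-c)| ≤ -a := by rw [abs_neg]; rw [abs_of_neg ha] at hca; exact hca
    have h := key3_pos (a := -a) (c := -c) hq (by linarith) hca'
    rw [abs_neg, abs_neg] at h
    have e1 : |a| ^ q * -a - |c| ^ q * -c = -(|a| ^ q * a - |c| ^ q * c) := by ring
    have e2 : (-a) - (-c) = -(a - c) := by ring
    rw [e1, e2, abs_neg, abs_neg] at h
    exact h

lemma key2'_aux {q : ℝ} (hq : 0 ≤ q) {a b K : ℝ} (hba : |b| ≤ |a|) (ha : |a| ≤ K) :
    |(|a| ^ q * a) + (|b| ^ q * b)| ≤ (q + 1) * K ^ q * |a + b| := by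
  have h := key3_aux (q := q) (a := a) (c := -b) hq (by rwa [abs_neg])
  rw [abs_neg] at h
  have e1 : |a| ^ q * a - |b| ^ q * (-b) = |a| ^ q * a + |b| ^ q * b := by ring
  have e2 : a - (-b) = a + b := by ring
  rw [e1, e2] at h
  refine h.trans ?_
  have hKq : |a| ^ q ≤ K ^ q := Real.rpow_le_rpow (abs_nonneg a) ha hq
  calc (q + 1) * (|a| ^ q * |a + b|) ≤ (q + 1) * (K ^ q * |a + b|) := by
        exact mul_le_mul_of_nonneg_left
          (mul_le_mul_of_nonneg_right hKq (abs_nonneg _)) (by linarith)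
    _ = (q + 1) * K ^ q * |a + b| := by ring

lemma key2_aux {q : ℝ} (hq : 0 ≤ q) {a b K : ℝ} (ha : |a| ≤ K) (hb : |b| ≤ K) :
    |(|a| ^ q * a) + (|b| ^ q * b)| ≤ (q + 1) * K ^ q * |a + b| := by
  rcases le_total |b| |a| with hle | hle
  · exact key2'_aux hq hle ha
  · rw [add_comm (|a| ^ q * a) (|b| ^ q * b), add_comm a b]
    exact key2'_aux hq hle hb

/-- Bound for the discrete `p`-Laplacian of a function with Lipschitz-type first and
second order difference bounds. -/
theorem abs_Dph_le_of_difference_bounds (d : ℕ) (hd : 1 ≤ d) (p : ℝ) (hp : 2 ≤ p)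
    (h r : ℝ) (hh : 0 < h) (hr : 0 < r) (M : ℝ) (hM : 0 < M)
    (ω : (Fin d → ℤ) → ℝ) (hsym : ∀ β, ω (-β) = ω β) (hnn : ∀ β, 0 ≤ ω β)
    (hzero : ∀ β, r ≤ ‖ygrid d h β‖ → ω β = 0)
    (hsum : ∑ᶠ β, ω β ≤ M * r ^ (-p))
    (v : EuclideanSpace ℝ (Fin d) → ℝ) (hv : BddAbove (Set.range fun z => |v z|))
    (C₁ C₂ : ℝ) (hC₁ : 0 ≤ C₁) (hC₂ : 0 ≤ C₂)
    (h1 : ∀ x y, |v (x + y) - v x| ≤ C₁ * ‖y‖)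
    (h2 : ∀ x y, |v (x + y) + v (x - y) - 2 * v x| ≤ C₂ * ‖y‖ ^ (2 : ℕ))
    (x : EuclideanSpace ℝ (Fin d)) :
    |Dph d p h ω v x| ≤
        (p - 1) / 2 * C₁ ^ (p - 2) * C₂ * ∑ᶠ β, ‖ygrid d h β‖ ^ p * ω β ∧
      (p - 1) / 2 * C₁ ^ (p - 2) * C₂ * ∑ᶠ β, ‖ygrid d h β‖ ^ p * ω β ≤
        (p - 1) / 2 * C₁ ^ (p - 2) * C₂ * M := by
  have hq : (0:ℝ) ≤ p - 2 := by linarith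
  have hp1 : (0:ℝ) ≤ p - 1 := by linarith
  set N : ℤ := ⌈r / h⌉ with hN
  set T : Finset (Fin d → ℤ) := Fintype.piFinset (fun _ => Finset.Icc (-N) N) with hT
  have happly : ∀ (β : Fin d → ℤ) (i : Fin d), (ygrid d h β) i = h * (β i : ℝ) :=
    fun β i => rfl
  have hcoord : ∀ (β : Fin d → ℤ) (i : Fin d), |h * (β i : ℝ)| ≤ ‖ygrid d h β‖ := by
    intro β i
    rw [EuclideanSpace.norm_eq]
    have h1' : |h * (β i : ℝ)| ^ 2 ≤ ∑ j, ‖(ygrid d h β) j‖ ^ 2 := by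
      have hi : ‖(ygrid d h β) i‖ ^ 2 ≤ ∑ j, ‖(ygrid d h β) j‖ ^ 2 :=
        Finset.single_le_sum (f := fun j => ‖(ygrid d h β) j‖ ^ 2)
          (fun j _ => sq_nonneg _) (Finset.mem_univ i)
      calc |h * (β i : ℝ)| ^ 2 = ‖(ygrid d h β) i‖ ^ 2 := by
            rw [happly, Real.norm_eq_abs, sq_abs]
        _ ≤ _ := hi
    calc |h * (β i : ℝ)| = Real.sqrt (|h * (β i : ℝ)| ^ 2) := (Real.sqrt_sq (abs_nonneg _)).symm
      _ ≤ Real.sqrt (∑ j, ‖(ygrid d h β) j‖ ^ 2) := Real.sqrt_le_sqrt h1'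
  have hmemT : ∀ β, ω β ≠ 0 → β ∈ T := by
    intro β hβ
    have hlt : ‖ygrid d h β‖ < r := lt_of_not_ge fun hge => hβ (hzero β hge)
    rw [hT, Fintype.mem_piFinset]
    intro i
    rw [Finset.mem_Icc, ← abs_le]
    have hlt' : |h * (β i : ℝ)| < r := (hcoord β i).trans_lt hlt
    rw [abs_mul, abs_of_pos hh] at hlt'
    have h2' : |(β i : ℝ)| < r / h := by
      rw [lt_div_iff₀ hh]; linarith [hlt']
    have h3' : ((|β i| : ℤ) : ℝ) ≤ ((N : ℤ) : ℝ) := by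
      push_cast
      calc |(β i : ℝ)| ≤ r / h := h2'.le
        _ ≤ (⌈r / h⌉ : ℝ) := Int.le_ceil _
    exact_mod_cast h3'
  set f : (Fin d → ℤ) → ℝ := fun β => Jp p (v (x + ygrid d h β) - v x) * ω β with hf
  have hD : Dph d p h ω v x = ∑ β ∈ T, f β := by
    apply finsum_eq_sum_of_support_subset
    intro β hβ
    simp only [Function.mem_support, hf] at hβ
    exact Finset.mem_coe.2 (hmemT β fun h0 => hβ (by rw [h0, mul_zero]))
  have hS1 : ∑ᶠ β, ‖ygrid d h β‖ ^ p * ω β = ∑ β ∈ T, ‖ygrid d h β‖ ^ p * ω β := by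
    apply finsum_eq_sum_of_support_subset
    intro β hβ
    simp only [Function.mem_support] at hβ
    exact Finset.mem_coe.2 (hmemT β fun h0 => hβ (by rw [h0, mul_zero]))
  have hS0 : ∑ᶠ β, ω β = ∑ β ∈ T, ω β := by
    apply finsum_eq_sum_of_support_subset
    intro β hβ
    exact Finset.mem_coe.2 (hmemT β hβ)
  have hyneg : ∀ β, ygrid d h (-β) = -(ygrid d h β) := by
    intro β
    ext i
    show h * ((-β) i : ℝ) = -(h * (β i : ℝ))
    rw [Pi.neg_apply]
    push_cast
    ring
  have hTneg : ∀ β : Fin d → ℤ, β ∈ T ↔ -β ∈ T := by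
    intro β
    simp only [hT, Fintype.mem_piFinset, Finset.mem_Icc, Pi.neg_apply]
    constructor <;> (intro hb i; have := hb i; omega)
  have hswap : ∑ β ∈ T, f β = ∑ β ∈ T, f (-β) := by
    apply Finset.sum_equiv (Equiv.neg (Fin d → ℤ)) (fun β => hTneg β)
    intro β _
    simp only [Equiv.neg_apply, neg_neg]
  have hterm : ∀ β : Fin d → ℤ, |f β + f (-β)| ≤
      (p - 1) * C₁ ^ (p - 2) * C₂ * (‖ygrid d h β‖ ^ p * ω β) := by
    intro β
    set y := ygrid d h β with hy
    have hb' : f (-β) = Jp p (v (x - y) - v x) * ω β := by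
      simp only [hf]
      rw [hyneg, hsym, ← sub_eq_add_neg]
    set a := v (x + y) - v x with hadef
    set b := v (x - y) - v x with hbdef
    have hstep : f β + f (-β) = (Jp p a + Jp p b) * ω β := by
      rw [hb']; simp only [hf]; ring
    rw [hstep, abs_mul, abs_of_nonneg (hnn β)]
    have haK : |a| ≤ C₁ * ‖y‖ := h1 x y
    have hbK : |b| ≤ C₁ * ‖y‖ := by
      have := h1 x (-y); rwa [norm_neg, ← sub_eq_add_neg] at this
    have hab : |a + b| ≤ C₂ * ‖y‖ ^ (2 : ℕ) := by
      have h2' := h2 x y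
      have he : v (x + y) + v (x - y) - 2 * v x = a + b := by
        rw [hadef, hbdef]; ring
      rwa [he] at h2'
    have hJ : |Jp p a + Jp p b| ≤ (p - 2 + 1) * (C₁ * ‖y‖) ^ (p - 2) * |a + b| := by
      simpa [Jp] using key2_aux (q := p - 2) hq haK hbK
    rcases eq_or_lt_of_le (norm_nonneg y) with hy0 | hy0
    · have ha0 : a = 0 := by
        have : |a| ≤ 0 := by rw [← hy0] at haK; simpa using haK
        exact abs_eq_zero.1 (le_antisymm this (abs_nonneg a))
      have hb0 : b = 0 := by
        have : |b| ≤ 0 := by rw [← hy0] at hbK; simpa using hbK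
        exact abs_eq_zero.1 (le_antisymm this (abs_nonneg b))
      rw [ha0, hb0]
      simp only [Jp, mul_zero, add_zero, abs_zero, zero_mul]
      have : (0:ℝ) ≤ ‖y‖ ^ p * ω β :=
        mul_nonneg (Real.rpow_nonneg (norm_nonneg y) p) (hnn β)
      have hc1 : (0:ℝ) ≤ C₁ ^ (p - 2) := Real.rpow_nonneg hC₁ _
      positivity
    · calc |Jp p a + Jp p b| * ω β
          ≤ ((p - 2 + 1) * (C₁ * ‖y‖) ^ (p - 2) * |a + b|) * ω β :=
            mul_le_mul_of_nonneg_right hJ (hnn β)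
        _ ≤ ((p - 2 + 1) * (C₁ * ‖y‖) ^ (p - 2) * (C₂ * ‖y‖ ^ (2 : ℕ))) * ω β := by
            refine mul_le_mul_of_nonneg_right ?_ (hnn β)
            refine mul_le_mul_of_nonneg_left hab ?_
            have : (0:ℝ) ≤ (C₁ * ‖y‖) ^ (p - 2) :=
              Real.rpow_nonneg (mul_nonneg hC₁ (norm_nonneg y)) _
            nlinarith
        _ = (p - 1) * C₁ ^ (p - 2) * C₂ * (‖y‖ ^ p * ω β) := by
            rw [Real.mul_rpow hC₁ (norm_nonneg y)]
            have h2p : ‖y‖ ^ (2 : ℕ) = ‖y‖ ^ ((2 : ℕ) : ℝ) := (Real.rpow_natCast _ 2).symm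
            have hprod : ‖y‖ ^ (p - 2) * ‖y‖ ^ ((2 : ℕ) : ℝ) = ‖y‖ ^ p := by
              rw [← Real.rpow_add hy0]; norm_num
            rw [h2p, ← hprod]
            ring
  constructor
  · rw [hD, hS1]
    have h2S : ∑ β ∈ T, f β = (∑ β ∈ T, (f β + f (-β))) / 2 := by
      rw [Finset.sum_add_distrib, ← hswap]; ring
    rw [h2S]
    calc |(∑ β ∈ T, (f β + f (-β))) / 2|
        = |∑ β ∈ T, (f β + f (-β))| / 2 := by rw [abs_div, abs_two]
      _ ≤ (∑ β ∈ T, |f β + f (-β)|) / 2 := by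
          apply div_le_div_of_nonneg_right ?_ ?_ |>.trans_eq rfl
          · exact Finset.abs_sum_le_sum_abs _ _
          · norm_num
      _ ≤ (∑ β ∈ T, (p - 1) * C₁ ^ (p - 2) * C₂ * (‖ygrid d h β‖ ^ p * ω β)) / 2 := by
          apply div_le_div_of_nonneg_right ?_ ?_ |>.trans_eq rfl
          · exact Finset.sum_le_sum fun β _ => hterm β
          · norm_num
      _ = (p - 1) / 2 * C₁ ^ (p - 2) * C₂ * ∑ β ∈ T, ‖ygrid d h β‖ ^ p * ω β := by
          rw [← Finset.mul_sum]
          ring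
  · have hsum' : ∑ β ∈ T, ‖ygrid d h β‖ ^ p * ω β ≤ M := by
      calc ∑ β ∈ T, ‖ygrid d h β‖ ^ p * ω β ≤ ∑ β ∈ T, r ^ p * ω β := by
            apply Finset.sum_le_sum
            intro β _
            rcases eq_or_ne (ω β) 0 with h0 | h0
            · simp [h0]
            · have hlt : ‖ygrid d h β‖ < r := lt_of_not_ge fun hge => h0 (hzero β hge)
              exact mul_le_mul_of_nonneg_right
                (Real.rpow_le_rpow (norm_nonneg _) hlt.le (by linarith)) (hnn β)
        _ = r ^ p * ∑ β ∈ T, ω β := (Finset.mul_sum _ _ _).symm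
        _ ≤ r ^ p * (M * r ^ (-p)) := by
            refine mul_le_mul_of_nonneg_left ?_ (Real.rpow_nonneg hr.le p)
            rw [← hS0]; exact hsum
        _ = M := by
            rw [mul_comm M, ← mul_assoc, ← Real.rpow_add hr]
            simp
    rw [hS1]
    refine mul_le_mul_of_nonneg_left hsum' ?_
    have : (0:ℝ) ≤ C₁ ^ (p - 2) := Real.rpow_nonneg hC₁ _
    positivity
end
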